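/- (Birch's theorem) Let S ⊆ ℝ^n be a linear subspace and x₀, x* ∈ ℝ^n with all coordinates positive. Then the intersection (x₀ + S) ∩ {x* ∘ e^v : v ∈ S^⊥} consists of exactly one point, where x* ∘ e^v denotes the componentwise product (x*_1 e^{v_1}, ..., x*_n e^{v_n}). -/

import Mathlib

lemma birch_aux1 (a b : ℝ) (ha : 0 < a) (hb : 0 < b) (t : ℝ) :
    b * |t| - 4*b^2/a ≤ a * Real.exp t - b * t := by
  have hK : 0 < 4*b^2/a := by positivity
  rcases le_or_gt t 0 with ht | ht
  · rw [abs_of_nonpos ht]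
    nlinarith [Real.exp_pos t]
  · rw [abs_of_pos ht]
    have h3 := Real.add_one_le_exp (t/2)
    have h4 : Real.exp t = Real.exp (t/2) * Real.exp (t/2) := by
      rw [← Real.exp_add]; ring_nf
    have h5 : t^2/4 ≤ Real.exp t := by nlinarith [Real.exp_pos (t/2)]
    have key : 2*b*t - 4*b^2/a ≤ a * (t^2/4) := by
      rw [sub_le_iff_le_add, ← sub_nonneg]
      have : a * (t^2/4) + 4*b^2/a - 2*b*t = (a*t - 4*b)^2 / (4*a) := by
        field_simp; ring
      rw [this]; positivity
    nlinarith

lemma birch_norm_le (n : ℕ) (v : EuclideanSpace ℝ (Fin n)) : ‖v‖ ≤ ∑ i, |v i| := by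
  rw [EuclideanSpace.norm_eq]
  have h1 : ∑ i, ‖v i‖^2 ≤ (∑ i, |v i|)^2 := by
    simp only [Real.norm_eq_abs]
    exact Finset.sum_sq_le_sq_sum_of_nonneg (fun i _ => abs_nonneg _)
  calc Real.sqrt (∑ i, ‖v i‖^2) ≤ Real.sqrt ((∑ i, |v i|)^2) := Real.sqrt_le_sqrt h1
    _ = ∑ i, |v i| := Real.sqrt_sq (Finset.sum_nonneg fun i _ => abs_nonneg _)

lemma birch_deriv (n : ℕ) (x₀ xs u w : EuclideanSpace ℝ (Fin n)) :
    HasDerivAt (fun t : ℝ => ∑ i, (xs i * Real.exp (u i + t * w i) - x₀ i * (u i + t * w i)))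
      (∑ i, (xs i * Real.exp (u i) - x₀ i) * w i) 0 := by
  have h : ∀ i : Fin n, HasDerivAt
      (fun t : ℝ => xs i * Real.exp (u i + t * w i) - x₀ i * (u i + t * w i))
      ((xs i * Real.exp (u i) - x₀ i) * w i) 0 := by
    intro i
    have hlin : HasDerivAt (fun t : ℝ => u i + t * w i) (w i) 0 :=
      (hasDerivAt_mul_const (w i)).const_add (u i)
    have h1 : HasDerivAt (fun t : ℝ => xs i * Real.exp (u i + t * w i))
        (xs i * (Real.exp (u i + 0 * w i) * w i)) 0 := (hlin.exp).const_mul (xs i)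
    have h2 : HasDerivAt (fun t : ℝ => x₀ i * (u i + t * w i)) (x₀ i * w i) 0 :=
      hlin.const_mul (x₀ i)
    have := h1.fun_sub h2
    exact this.congr_deriv (by simp only [zero_mul, add_zero]; ring)
  exact HasDerivAt.fun_sum (fun i _ => h i)

lemma birch_uniq (n : ℕ) (S : Submodule ℝ (EuclideanSpace ℝ (Fin n)))
    (x₀ xs : EuclideanSpace ℝ (Fin n)) (hxs : ∀ i, 0 < xs i)
    (x y : EuclideanSpace ℝ (Fin n))
    (hx : x - x₀ ∈ S ∧ ∃ v ∈ Sᗮ, ∀ i, x i = xs i * Real.exp (v i))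
    (hy : y - x₀ ∈ S ∧ ∃ v ∈ Sᗮ, ∀ i, y i = xs i * Real.exp (v i)) : x = y := by
  obtain ⟨hxS, v, hv, hxv⟩ := hx
  obtain ⟨hyS, w, hw, hyw⟩ := hy
  have hxy : x - y ∈ S := by
    have := S.sub_mem hxS hyS
    simpa using this
  have hvw : v - w ∈ Sᗮ := Sᗮ.sub_mem hv hw
  have hinner : (inner ℝ (x - y) (v - w) : ℝ) = 0 :=
    (Submodule.mem_orthogonal S (v - w)).mp hvw (x - y) hxy
  have hsum : ∑ i, (x i - y i) * (v i - w i) = 0 := by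
    rw [← hinner]
    simp [PiLp.inner_apply, RCLike.inner_apply, conj_trivial, mul_comm]
  have hterm : ∀ i : Fin n, (x i - y i) * (v i - w i) =
      xs i * ((Real.exp (v i) - Real.exp (w i)) * (v i - w i)) := by
    intro i; rw [hxv i, hyw i]; ring
  have hnonneg : ∀ i ∈ Finset.univ, (0:ℝ) ≤ (x i - y i) * (v i - w i) := by
    intro i _
    rw [hterm i]
    apply mul_nonneg (hxs i).le
    rcases le_total (v i) (w i) with h | h
    · have h1 : Real.exp (v i) ≤ Real.exp (w i) := Real.exp_le_exp.mpr h
      nlinarith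
    · have h1 : Real.exp (w i) ≤ Real.exp (v i) := Real.exp_le_exp.mpr h
      nlinarith
  have hzero : ∀ i ∈ Finset.univ, (x i - y i) * (v i - w i) = 0 :=
    (Finset.sum_eq_zero_iff_of_nonneg hnonneg).mp hsum
  ext i
  have := hzero i (Finset.mem_univ i)
  rw [hterm i] at this
  rcases mul_eq_zero.mp this with h | h
  · exact absurd h (ne_of_gt (hxs i))
  · rcases mul_eq_zero.mp h with h | h
    · rw [hxv i, hyw i]
      have : Real.exp (v i) = Real.exp (w i) := by linarith
      rw [this]
    · have : v i = w i := by linarith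
      rw [hxv i, hyw i, this]

theorem stmt5 (n : ℕ) (S : Submodule ℝ (EuclideanSpace ℝ (Fin n)))
    (x₀ xs : EuclideanSpace ℝ (Fin n))
    (hx₀ : ∀ i, 0 < x₀ i) (hxs : ∀ i, 0 < xs i) :
    ∃! x : EuclideanSpace ℝ (Fin n),
      x - x₀ ∈ S ∧ ∃ v ∈ Sᗮ, ∀ i, x i = xs i * Real.exp (v i) := by
  rcases Nat.eq_zero_or_pos n with hn | hn
  · subst hn
    refine ⟨x₀, ⟨by simp, 0, Sᗮ.zero_mem, fun i => i.elim0⟩,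
      fun y _ => Subsingleton.elim y x₀⟩
  haveI : Nonempty (Fin n) := ⟨⟨0, hn⟩⟩
  classical
  set f : EuclideanSpace ℝ (Fin n) → ℝ :=
    fun v => ∑ i, (xs i * Real.exp (v i) - x₀ i * v i) with hf
  have hcont : Continuous f := by
    apply continuous_finset_sum
    intro i _
    have hap : Continuous fun v : EuclideanSpace ℝ (Fin n) => v i := (continuous_apply i).comp (PiLp.continuous_ofLp 2 _)
    exact (continuous_const.mul (Real.continuous_exp.comp hap)).sub
      (continuous_const.mul hap)
  set c : ℝ := Finset.univ.inf' Finset.univ_nonempty (fun i => x₀ i) with hc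
  have hcpos : 0 < c := by
    rw [hc, Finset.lt_inf'_iff]
    exact fun i _ => hx₀ i
  set K : ℝ := ∑ i, 4*(x₀ i)^2/(xs i) with hK
  have hbound : ∀ v : EuclideanSpace ℝ (Fin n), c * ‖v‖ - K ≤ f v := by
    intro v
    have h2 : ∑ i, (x₀ i * |v i| - 4*(x₀ i)^2/(xs i)) ≤ f v :=
      Finset.sum_le_sum fun i _ => birch_aux1 _ _ (hxs i) (hx₀ i) (v i)
    rw [Finset.sum_sub_distrib] at h2
    have h3 : c * ‖v‖ ≤ ∑ i, x₀ i * |v i| := by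
      calc c * ‖v‖ ≤ c * ∑ i, |v i| :=
            mul_le_mul_of_nonneg_left (birch_norm_le n v) hcpos.le
        _ = ∑ i, c * |v i| := Finset.mul_sum _ _ _
        _ ≤ ∑ i, x₀ i * |v i| := Finset.sum_le_sum fun i _ =>
            mul_le_mul_of_nonneg_right (Finset.inf'_le _ (Finset.mem_univ i)) (abs_nonneg _)
    rw [hK]
    linarith
  have hT : Filter.Tendsto (fun v : ↥Sᗮ => f ↑v) (Filter.cocompact _) Filter.atTop := by
    have h1 : Filter.Tendsto (fun v : ↥Sᗮ => c * ‖v‖ - K) (Filter.cocompact _) Filter.atTop :=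
      Filter.tendsto_atTop_add_const_right _ (-K)
        (tendsto_norm_cocompact_atTop.const_mul_atTop hcpos) |>.congr (by intro x; ring)
    exact Filter.tendsto_atTop_mono (fun v => by simpa using hbound ↑v) h1
  obtain ⟨v₀, hmin⟩ := (hcont.comp continuous_subtype_val).exists_forall_le hT
  set u : EuclideanSpace ℝ (Fin n) := (v₀ : EuclideanSpace ℝ (Fin n)) with hu'
  have hu : u ∈ Sᗮ := v₀.2
  have hderiv : ∀ w ∈ Sᗮ, ∑ i, (xs i * Real.exp (u i) - x₀ i) * w i = 0 := by
    intro w hw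
    have hglobal : ∀ t : ℝ, f u ≤ f (u + t • w) := fun t =>
      hmin ⟨u + t • w, Sᗮ.add_mem hu (Sᗮ.smul_mem t hw)⟩
    have hfun : ∀ t : ℝ, f (u + t • w) =
        ∑ i, (xs i * Real.exp (u i + t * w i) - x₀ i * (u i + t * w i)) := by
      intro t
      apply Finset.sum_congr rfl
      intro i _
      simp [PiLp.add_apply, PiLp.smul_apply, smul_eq_mul]
    have hlocal : IsLocalMin
        (fun t : ℝ => ∑ i, (xs i * Real.exp (u i + t * w i) - x₀ i * (u i + t * w i))) 0 := by
      apply Filter.Eventually.of_forall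
      intro t
      simp only []
      rw [← hfun t]
      have h0 : ∑ i, (xs i * Real.exp (u i + (0:ℝ) * w i) - x₀ i * (u i + (0:ℝ) * w i)) = f u := by
        simp [hf]
      rw [h0]
      exact hglobal t
    exact hlocal.hasDerivAt_eq_zero (birch_deriv n x₀ xs u w)
  obtain ⟨z, hzdef⟩ : ∃ z : EuclideanSpace ℝ (Fin n), ∀ i, z i = xs i * Real.exp (u i) :=
    ⟨(WithLp.equiv 2 _).symm fun i => xs i * Real.exp (u i), fun _ => rfl⟩
  have hmem : z - x₀ ∈ S := by
    rw [← Submodule.orthogonal_orthogonal S, Submodule.mem_orthogonal]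
    intro w hw
    have h2 : (inner ℝ w (z - x₀) : ℝ) = ∑ i, (xs i * Real.exp (u i) - x₀ i) * w i := by
      simp only [PiLp.inner_apply, RCLike.inner_apply, conj_trivial, PiLp.sub_apply]
      exact Finset.sum_congr rfl fun i _ => by rw [hzdef i]
    rw [h2, hderiv w hw]
  have hzprop : z - x₀ ∈ S ∧ ∃ v ∈ Sᗮ, ∀ i, z i = xs i * Real.exp (v i) :=
    ⟨hmem, u, hu, hzdef⟩
  exact ⟨z, hzprop, fun y hy => birch_uniq n S x₀ xs hxs y z hy hzprop⟩
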